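/- Let n and d be integers with d > n ≥ 3, and let f ∈ ℂ[x₁,…,xₙ] be a homogeneous polynomial of degree d whose Milnor algebra ℂ[x₁,…,xₙ]/(∂f) is finite-dimensional as a ℂ-vector space. Then 2d−n+1 ≤ n(d−2), and there exist a monomial of degree 2d−n and a monomial of degree 2d−n+1 whose residue classes in the Milnor algebra ℂ[x₁,…,xₙ]/(∂f) are nonzero. -/

import Mathlib

open MvPolynomial

noncomputable section
namespace MilnorAux


lemma degree_eq_sum {n : ℕ} (ν : Fin n →₀ ℕ) : ν.degree = ∑ i, ν i := by
  have : ∑ i, ν i = ∑ i ∈ ν.support, ν i :=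
    (Finset.sum_subset (Finset.subset_univ _)
       (fun x _ hx => Finsupp.notMem_support_iff.mp hx)).symm
  rw [Finsupp.degree_apply, ← this]

lemma isHom_pderiv {n d : ℕ} {f : MvPolynomial (Fin n) ℂ} (hf : f.IsHomogeneous d) (i : Fin n) :
    (pderiv i f).IsHomogeneous (d - 1) := by
  have hrepr : pderiv i f
      = ∑ s ∈ f.support, monomial (s - Finsupp.single i 1) (f.coeff s * s i) := by
    conv_lhs => rw [← support_sum_monomial_coeff f]
    rw [map_sum]
    exact Finset.sum_congr rfl (fun s _ => pderiv_monomial)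
  rw [hrepr]
  apply IsHomogeneous.sum
  intro s hs
  by_cases h : s i = 0
  · simp only [h, Nat.cast_zero, mul_zero, monomial_zero]
    exact isHomogeneous_zero _ _ _
  · apply isHomogeneous_monomial
    have hdeg : s.degree = d := by
      by_contra hne
      exact mem_support_iff.mp hs (hf.coeff_eq_zero hne)
    set u := s - Finsupp.single i 1 with hu
    have hui : u i = s i - 1 := by simp [hu]
    have huj : ∀ j, j ≠ i → u j = s j := by
      intro j hj
      simp [hu, Finsupp.single_apply, Ne.symm hj]
    rw [degree_eq_sum] at hdeg ⊢
    rw [← Finset.add_sum_erase _ _ (Finset.mem_univ i)] at hdeg ⊢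
    have hcongr : ∑ j ∈ Finset.univ.erase i, u j = ∑ j ∈ Finset.univ.erase i, s j :=
      Finset.sum_congr rfl (fun j hj => huj j (Finset.ne_of_mem_erase hj))
    omega

lemma homComp_mul {n : ℕ} {h q : MvPolynomial (Fin n) ℂ} {e K : ℕ} (hh : h.IsHomogeneous e)
    (heK : e ≤ K) :
    homogeneousComponent K (q * h) = homogeneousComponent (K - e) q * h := by
  induction q using MvPolynomial.induction_on' with
  | monomial μ a =>
    rw [homogeneousComponent_of_mem
        ((mem_homogeneousSubmodule _ _).mpr (isHomogeneous_monomial a rfl)),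
      homogeneousComponent_of_mem
        ((mem_homogeneousSubmodule _ _).mpr ((isHomogeneous_monomial a rfl).mul hh))]
    by_cases hc : K - e = μ.degree
    · rw [if_pos hc, if_pos (by omega)]
    · rw [if_neg hc, if_neg (by omega), zero_mul]
  | add p q ihp ihq =>
    rw [add_mul, map_add, map_add, ihp, ihq, add_mul]

abbrev M (n D : ℕ) := {ν : Fin n →₀ ℕ // ν.degree = D}

def mEquiv (n D : ℕ) : Sym (Fin n) D ≃ M n D :=
  (Sym.equivNatSum (Fin n) D).trans (Equiv.subtypeEquivRight (fun ν => by
    simp [Finsupp.degree_apply, Finsupp.sum]))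

instance (n D : ℕ) : Fintype (M n D) := Fintype.ofEquiv _ (mEquiv n D)

lemma card_M (n D : ℕ) : Fintype.card (M n D) = (n + D - 1).choose D := by
  rw [← Fintype.card_congr (mEquiv n D), Sym.card_sym_eq_multichoose,
    Fintype.card_fin, Nat.multichoose_eq]

/-- The Finset of all exponents of degree D. -/
def mFinset (n D : ℕ) : Finset (Fin n →₀ ℕ) := Finset.univ.image (Subtype.val : M n D → _)

lemma mem_mFinset {n D : ℕ} (ν : Fin n →₀ ℕ) : ν ∈ mFinset n D ↔ ν.degree = D := by
  constructor
  · rintro hm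
    obtain ⟨μ, -, rfl⟩ := Finset.mem_image.mp hm
    exact μ.2
  · intro hν
    exact Finset.mem_image.mpr ⟨⟨ν, hν⟩, Finset.mem_univ _, rfl⟩

lemma sum_coeff_smul {n : ℕ} {g : MvPolynomial (Fin n) ℂ} {t : ℕ} (hg : g.IsHomogeneous t) :
    ∑ ν : M n t, g.coeff ν.1 • (monomial ν.1 (1:ℂ)) = g := by
  rw [← Finset.sum_subtype (mFinset n t) (fun ν => mem_mFinset ν)
    (fun ν => g.coeff ν • (monomial ν (1:ℂ)))]
  have hsub : g.support ⊆ mFinset n t := by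
    intro ν hν
    rw [mem_mFinset]
    by_contra hne
    exact mem_support_iff.mp hν (hg.coeff_eq_zero hne)
  have h1 : ∀ ν ∈ mFinset n t, g.coeff ν • (monomial ν (1:ℂ)) = monomial ν (g.coeff ν) := by
    intro ν _
    rw [smul_monomial, smul_eq_mul, mul_one]
  rw [Finset.sum_congr rfl h1]
  rw [← Finset.sum_subset hsub (fun ν _ hν => by rw [notMem_support_iff.mp hν, monomial_zero])]
  exact support_sum_monomial_coeff g

variable {n : ℕ}

/-- The linear map sending coefficient vectors to combinations `∑ c_(i,ν) x^ν h i`. -/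
def Phi {ι : Type*} [Fintype ι] (h : ι → MvPolynomial (Fin n) ℂ) (t : ℕ) :
    ((ι × M n t) → ℂ) →ₗ[ℂ] MvPolynomial (Fin n) ℂ :=
  Fintype.linearCombination ℂ (fun p => monomial p.2.1 1 * h p.1)

lemma monomial_mem_range_Phi {ι : Type*} [Fintype ι] {e K : ℕ}
    (h : ι → MvPolynomial (Fin n) ℂ) (hh : ∀ i, (h i).IsHomogeneous e) (heK : e ≤ K)
    {ν : Fin n →₀ ℕ} (hν : ν.degree = K)
    (hmem : monomial ν (1:ℂ) ∈ Ideal.span (Set.range h)) :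
    monomial ν (1:ℂ) ∈ LinearMap.range (Phi h (K - e)) := by
  obtain ⟨c, hc⟩ := (Ideal.mem_span_range_iff_exists_fun).mp hmem
  refine ⟨fun p => (homogeneousComponent (K - e) (c p.1)).coeff p.2.1, ?_⟩
  rw [Phi, Fintype.linearCombination_apply, Fintype.sum_prod_type]
  have hstep : ∀ i : ι,
      (∑ ν' : M n (K - e),
        (homogeneousComponent (K - e) (c i)).coeff ν'.1 • (monomial ν'.1 1 * h i))
      = homogeneousComponent K (c i * h i) := by
    intro i
    rw [homComp_mul (hh i) heK]
    calc ∑ ν' : M n (K-e), (homogeneousComponent (K-e) (c i)).coeff ν'.1 • (monomial ν'.1 1 * h i)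
        = (∑ ν' : M n (K-e), (homogeneousComponent (K-e) (c i)).coeff ν'.1 • monomial ν'.1 (1:ℂ)) * h i := by
          rw [Finset.sum_mul]
          exact Finset.sum_congr rfl (fun ν' _ => (smul_mul_assoc _ _ _).symm)
      _ = _ := by rw [sum_coeff_smul (homogeneousComponent_isHomogeneous (K - e) (c i))]
  rw [Finset.sum_congr rfl (fun i _ => hstep i), ← map_sum, hc]
  rw [homogeneousComponent_of_mem ((mem_homogeneousSubmodule _ _).mpr
    (isHomogeneous_monomial 1 hν)), if_pos rfl]

lemma card_le_of_all_monomials_mem {ι : Type*} [Fintype ι] {e K : ℕ}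
    (h : ι → MvPolynomial (Fin n) ℂ) (hh : ∀ i, (h i).IsHomogeneous e) (heK : e ≤ K)
    (hmem : ∀ ν : Fin n →₀ ℕ, ν.degree = K → monomial ν (1:ℂ) ∈ Ideal.span (Set.range h)) :
    Fintype.card (M n K) + Module.finrank ℂ (LinearMap.ker (Phi h (K - e)))
      ≤ Fintype.card ι * Fintype.card (M n (K - e)) := by
  have hrn := LinearMap.finrank_range_add_finrank_ker (Phi h (K - e))
  rw [Module.finrank_pi, Fintype.card_prod] at hrn
  have hind : LinearIndependent ℂ (fun ν : M n K =>
      (⟨monomial ν.1 (1:ℂ), monomial_mem_range_Phi h hh heK ν.2 (hmem ν.1 ν.2)⟩ :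
        LinearMap.range (Phi h (K - e)))) := by
    apply LinearIndependent.of_comp (LinearMap.range (Phi h (K - e))).subtype
    have := ((basisMonomials (Fin n) ℂ).linearIndependent).comp
      (Subtype.val : M n K → _) Subtype.val_injective
    simpa [coe_basisMonomials, Function.comp_def] using this
  have hcard := hind.fintype_card_le_finrank
  omega

lemma two_mul_choose_two (m : ℕ) : 2 * m.choose 2 = m * (m - 1) := by
  induction m with
  | zero => simp
  | succ k ih =>
    rcases k with _ | j
    · simp
    · rw [Nat.choose_succ_succ (j+1) 1, Nat.choose_one_right]
      have hexp : (j + 1 + 1) * (j + 1 + 1 - 1) = (j+1)*((j+1)-1) + 2*(j+1) := by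
        simp only [Nat.add_sub_cancel]
        ring
      rw [hexp, ← ih]
      ring

lemma chooseBase (d : ℕ) (hd : 5 ≤ d) : 3 * (d+1).choose 2 ≤ (2*d).choose 2 := by
  have h1 := two_mul_choose_two (d+1)
  have h2 := two_mul_choose_two (2*d)
  simp only [Nat.add_sub_cancel] at h1
  have h2' : 2 * (2*d).choose 2 = 2*d*(2*d-1) := h2
  obtain ⟨c, rfl⟩ : ∃ c, d = c + 5 := ⟨d - 5, by omega⟩
  have ht : 2*(c+5) - 1 = 2*c + 9 := by omega
  rw [ht] at h2'
  nlinarith [h1, h2']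

lemma chooseStep (m d : ℕ) (hm : 2 ≤ m) (hmd : m + 1 < 2*d) (hd : 3 ≤ d)
    (IH : (m+1) * (d+1).choose m ≤ (2*d).choose m) :
    (m+2) * (d+1).choose (m+1) < (2*d).choose (m+1) := by
  have hpos2 : 0 < (2*d).choose (m+1) := Nat.choose_pos (by omega)
  by_cases hmd' : d + 1 < m + 1
  · rw [Nat.choose_eq_zero_of_lt hmd', Nat.mul_zero]
    exact hpos2
  · have hmle : m ≤ d := by omega
    have hCpos : 0 < (d+1).choose m := Nat.choose_pos (by omega)
    have key : ((m+2) * (d+1).choose (m+1)) * (m+1) < ((2*d).choose (m+1)) * (m+1) := by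
      have e1 : (d+1).choose (m+1) * (m+1) = (d+1).choose m * (d+1-m) :=
        Nat.choose_succ_right_eq _ _
      have e2 : (2*d).choose (m+1) * (m+1) = (2*d).choose m * (2*d-m) :=
        Nat.choose_succ_right_eq _ _
      rw [mul_assoc, e1, e2]
      obtain ⟨u, rfl⟩ : ∃ u, d = m + u := ⟨d - m, by omega⟩
      have eu1 : m + u + 1 - m = u + 1 := by omega
      have eu2 : 2*(m+u) - m = m + 2*u := by omega
      rw [eu1, eu2]
      calc (m+2) * ((m+u+1).choose m * (u+1))
          = ((m+2) * (u+1)) * (m+u+1).choose m := by ring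
        _ < ((m+1) * (m+2*u)) * (m+u+1).choose m := by
            apply Nat.mul_lt_mul_of_lt_of_le _ (le_refl _) hCpos
            nlinarith [hm]
        _ = ((m+1) * (m+u+1).choose m) * (m+2*u) := by ring
        _ ≤ (2*(m+u)).choose m * (m+2*u) := Nat.mul_le_mul_right _ IH
    exact Nat.lt_of_mul_lt_mul_right key

lemma chooseIneqA (d : ℕ) (hd : 5 ≤ d) :
    ∀ m, 2 ≤ m → m ≤ d → (m+1) * (d+1).choose m ≤ (2*d).choose m := by
  intro m hm
  induction m, hm using Nat.le_induction with
  | base => intro _; exact chooseBase d hd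
  | succ k hk ih =>
    intro hkd
    have hik := ih (by omega)
    have := chooseStep k d hk (by omega) (by omega) hik
    exact ((by omega : k+1+1 = k+2) ▸ this.le)

lemma chooseIneqStrict (m d : ℕ) (hm : 3 ≤ m) (hd : 5 ≤ d) (hmd : m ≤ d) :
    (m+1) * (d+1).choose m < (2*d).choose m := by
  obtain ⟨k, rfl⟩ : ∃ k, m = k + 1 := ⟨m - 1, by omega⟩
  have hik := chooseIneqA d hd k (by omega) (by omega)
  have := chooseStep k d (by omega) (by omega) (by omega) hik
  exact ((by omega : k+1+1 = k+2) ▸ this)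

section Kernel
variable {e : ℕ} (g : Fin 3 → MvPolynomial (Fin 3) ℂ)

lemma Phi_ite (hh : ∀ i, (g i).IsHomogeneous e) (i j : Fin 3) :
    Phi g e (fun p => if p.1 = i then (g j).coeff p.2.1 else 0) = g j * g i := by
  rw [Phi, Fintype.linearCombination_apply, Fintype.sum_prod_type]
  rw [Finset.sum_eq_single_of_mem i (Finset.mem_univ i) (fun b _ hb => by
    simp [hb])]
  simp only [if_pos rfl]
  calc ∑ ν : M 3 e, (g j).coeff ν.1 • (monomial ν.1 1 * g i)
      = (∑ ν : M 3 e, (g j).coeff ν.1 • monomial ν.1 (1:ℂ)) * g i := by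
        rw [Finset.sum_mul]
        exact Finset.sum_congr rfl (fun ν' _ => (smul_mul_assoc _ _ _).symm)
    _ = g j * g i := by rw [sum_coeff_smul (hh j)]

def rel (e : ℕ) (g : Fin 3 → MvPolynomial (Fin 3) ℂ) (i j : Fin 3) : (Fin 3 × M 3 e) → ℂ :=
  fun p => (if p.1 = i then (g j).coeff p.2.1 else 0) - (if p.1 = j then (g i).coeff p.2.1 else 0)

lemma rel_mem_ker (hh : ∀ i, (g i).IsHomogeneous e) (i j : Fin 3) :
    rel e g i j ∈ LinearMap.ker (Phi g e) := by
  have : rel e g i j = (fun p => if p.1 = i then (g j).coeff p.2.1 else 0)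
      - (fun p => if p.1 = j then (g i).coeff p.2.1 else 0) := rfl
  rw [LinearMap.mem_ker, this, map_sub, Phi_ite g hh, Phi_ite g hh, mul_comm, sub_self]

/-- reconstruct a polynomial identity from coefficient relations on degree-e exponents -/
lemma poly_of_coeffs (hh : ∀ i, (g i).IsHomogeneous e) (a b : ℂ) (i j : Fin 3)
    (hab : ∀ ν : M 3 e, a * (g i).coeff ν.1 + b * (g j).coeff ν.1 = 0) :
    a • g i + b • g j = 0 := by
  ext μ
  simp only [coeff_add, coeff_smul, coeff_zero, smul_eq_mul]
  by_cases hμ : μ.degree = e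
  · exact hab ⟨μ, hμ⟩
  · rw [(hh i).coeff_eq_zero hμ, (hh j).coeff_eq_zero hμ]
    ring

lemma three_le_finrank_ker (hh : ∀ i, (g i).IsHomogeneous e)
    (hind : LinearIndependent ℂ g) :
    3 ≤ Module.finrank ℂ (LinearMap.ker (Phi g e)) := by
  classical
  set w : Fin 3 → (LinearMap.ker (Phi g e)) := fun k =>
    if k = 0 then ⟨rel e g 0 1, rel_mem_ker g hh 0 1⟩
    else if k = 1 then ⟨rel e g 0 2, rel_mem_ker g hh 0 2⟩
    else ⟨rel e g 1 2, rel_mem_ker g hh 1 2⟩ with hw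
  have hindw : LinearIndependent ℂ w := by
    rw [Fintype.linearIndependent_iff]
    intro a ha
    have ha' : a 0 • rel e g 0 1 + a 1 • rel e g 0 2 + a 2 • rel e g 1 2 = 0 := by
      have := congrArg Subtype.val ha
      simpa [hw, Fin.sum_univ_three] using this
    have hev : ∀ (q : Fin 3) (ν : M 3 e),
        a 0 * rel e g 0 1 (q, ν) + a 1 * rel e g 0 2 (q, ν) + a 2 * rel e g 1 2 (q, ν) = 0 := by
      intro q ν
      exact congrFun ha' (q, ν)
    -- evaluate at q = 0 : a0 * coeff g1 + a1 * coeff g2 = 0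
    have h0 : ∀ ν : M 3 e, a 0 * (g 1).coeff ν.1 + a 1 * (g 2).coeff ν.1 = 0 := by
      intro ν
      have := hev 0 ν
      simpa [rel] using this
    have h1 : ∀ ν : M 3 e, (- a 0) * (g 0).coeff ν.1 + a 2 * (g 2).coeff ν.1 = 0 := by
      intro ν
      have := hev 1 ν
      simp [rel] at this
      linear_combination this
    have e0 : a 0 • g 1 + a 1 • g 2 = 0 := poly_of_coeffs g hh _ _ 1 2 h0
    have e1 : (- a 0) • g 0 + a 2 • g 2 = 0 := poly_of_coeffs g hh _ _ 0 2 h1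
    have hli := Fintype.linearIndependent_iff.mp hind
    have z01 : a 0 = 0 ∧ a 1 = 0 := by
      have := hli (fun k => if k = 1 then a 0 else if k = 2 then a 1 else 0) (by
        simpa [Fin.sum_univ_three] using e0)
      exact ⟨by simpa using this 1, by simpa using this 2⟩
    have z2 : a 2 = 0 := by
      have := hli (fun k => if k = 0 then (- a 0) else if k = 2 then a 2 else 0) (by
        simpa [Fin.sum_univ_three] using e1)
      simpa using this 2
    intro k
    fin_cases k
    · exact z01.1
    · exact z01.2
    · exact z2
  have := hindw.fintype_card_le_finrank
  simpa using this

end Kernel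

lemma degree_add {n : ℕ} (a b : Fin n →₀ ℕ) : (a + b).degree = a.degree + b.degree := by
  simp [Finsupp.degree_eq_weight_one, map_add]

lemma degree_single {n : ℕ} (i : Fin n) : (Finsupp.single i 1 : Fin n →₀ ℕ).degree = 1 := by
  simp [Finsupp.degree_apply, Finsupp.support_single_ne_zero i one_ne_zero]

end MilnorAux

open MilnorAux



/-- For a homogeneous polynomial `f` of degree `d > n ≥ 3` over `ℂ` with
finite-dimensional Milnor algebra, one has `2d - n + 1 ≤ n (d - 2)`, and there are monomials
of degrees `2d - n` and `2d - n + 1` with nonzero residue classes in the Milnor algebra. -/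
theorem nonzero_monomials_of_degree_two_d_sub_n
    (n d : ℕ) (hn : 3 ≤ n) (hd : n < d)
    (f : MvPolynomial (Fin n) ℂ) (hf : f.IsHomogeneous d)
    (J : Ideal (MvPolynomial (Fin n) ℂ))
    (hJ : J = Ideal.span (Set.range fun i => MvPolynomial.pderiv i f))
    (hfin : FiniteDimensional ℂ (MvPolynomial (Fin n) ℂ ⧸ J)) :
    2 * d - n + 1 ≤ n * (d - 2) ∧
    (∃ ν : Fin n →₀ ℕ, (∑ i, ν i) = 2 * d - n ∧
      Ideal.Quotient.mk J (MvPolynomial.monomial ν (1 : ℂ)) ≠ 0) ∧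
    (∃ ν : Fin n →₀ ℕ, (∑ i, ν i) = 2 * d - n + 1 ∧
      Ideal.Quotient.mk J (MvPolynomial.monomial ν (1 : ℂ)) ≠ 0) := by
  classical
  set g : Fin n → MvPolynomial (Fin n) ℂ := fun i => pderiv i f with hg
  have hghom : ∀ i, (g i).IsHomogeneous (d - 1) := fun i => isHom_pderiv hf i
  set K := 2 * d - n + 1 with hK
  have heK : d - 1 ≤ K := by omega
  have hex : ∃ ν : Fin n →₀ ℕ, ν.degree = K ∧
      monomial ν (1:ℂ) ∉ Ideal.span (Set.range g) := by
    by_contra hcon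
    push_neg at hcon
    have cardK : Fintype.card (M n K) = (2*d).choose (n-1) := by
      rw [card_M]
      have h1 : n + K - 1 = 2*d := by omega
      have h2 : K = 2*d - (n-1) := by omega
      rw [h1, h2, Nat.choose_symm (by omega)]
    have cardT : Fintype.card (M n (K - (d-1))) = (d+1).choose (n-1) := by
      rw [card_M]
      have h1 : n + (K - (d-1)) - 1 = d+1 := by omega
      have h2 : K - (d-1) = (d+1) - (n-1) := by omega
      rw [h1, h2, Nat.choose_symm (by omega)]
    rcases Nat.lt_or_ge n 4 with hn3 | hn4
    · -- n = 3 case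
      have hn3' : n = 3 := by omega
      subst hn3'
      have c1 : 2 * ((2*d).choose 2) = 2*d*(2*d-1) := two_mul_choose_two _
      have c2 : 2 * ((d+1).choose 2) = (d+1)*d := by
        have := two_mul_choose_two (d+1); simpa using this
      have hKe3 : K - (d-1) = d - 1 := by omega
      norm_num at cardK cardT
      by_cases hind : LinearIndependent ℂ g
      · have hle := card_le_of_all_monomials_mem g hghom heK hcon
        have hker : 3 ≤ Module.finrank ℂ (LinearMap.ker (Phi g (K - (d-1)))) := by
          rw [hKe3]; exact three_le_finrank_ker g hghom hind
        rw [cardK, cardT, Fintype.card_fin] at hle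
        have hle3 : (2*d).choose 2 + 3 ≤ 3 * ((d+1).choose 2) := by omega
        obtain ⟨c, rfl⟩ : ∃ c, d = c + 4 := ⟨d - 4, by omega⟩
        have ht : 2*(c+4) - 1 = 2*c + 7 := by omega
        rw [ht] at c1
        nlinarith [c1, c2, hle3]
      · obtain ⟨a, hsum, k, hk⟩ := Fintype.not_linearIndependent_iff.mp hind
        set g' : {i : Fin 3 // i ≠ k} → MvPolynomial (Fin 3) ℂ := fun i => g i.1 with hg'
        have hsub : Ideal.span (Set.range g) ≤ Ideal.span (Set.range g') := by
          rw [Ideal.span_le]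
          rintro x ⟨i, rfl⟩
          by_cases hik : i = k
          · subst hik
            have h2 : a i • g i + ∑ j ∈ Finset.univ.erase i, a j • g j = 0 := by
              rw [← hsum]
              exact Finset.add_sum_erase _ (fun j => a j • g j) (Finset.mem_univ i)
            have hgk : g i = (-(a i)⁻¹) • ∑ j ∈ Finset.univ.erase i, a j • g j := by
              have h3 : a i • g i = -∑ j ∈ Finset.univ.erase i, a j • g j :=
                eq_neg_of_add_eq_zero_left h2
              rw [neg_smul, ← smul_neg, ← h3, inv_smul_smul₀ hk]
            rw [hgk]
            refine Submodule.smul_of_tower_mem _ _ (Ideal.sum_mem _ ?_)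
            intro j hj
            refine Submodule.smul_of_tower_mem _ _ ?_
            exact Ideal.subset_span ⟨⟨j, Finset.ne_of_mem_erase hj⟩, rfl⟩
          · exact Ideal.subset_span ⟨⟨i, hik⟩, rfl⟩
        have hcon' : ∀ ν : Fin 3 →₀ ℕ, ν.degree = K →
            monomial ν (1:ℂ) ∈ Ideal.span (Set.range g') :=
          fun ν hν => hsub (hcon ν hν)
        have hle := card_le_of_all_monomials_mem g' (fun i => hghom i.1) heK hcon'
        have hcard2 : Fintype.card {i : Fin 3 // i ≠ k} = 2 := by
          simp [Fintype.card_subtype_compl]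
        rw [cardK, cardT, hcard2] at hle
        have hle2 : (2*d).choose 2 ≤ 2 * ((d+1).choose 2) := by omega
        obtain ⟨c, rfl⟩ : ∃ c, d = c + 4 := ⟨d - 4, by omega⟩
        have ht : 2*(c+4) - 1 = 2*c + 7 := by omega
        rw [ht] at c1
        nlinarith [c1, c2, hle2]
    · -- n ≥ 4 case
      have hle := card_le_of_all_monomials_mem g hghom heK hcon
      have hstrict := chooseIneqStrict (n-1) d (by omega) (by omega) (by omega)
      rw [cardK, cardT, Fintype.card_fin] at hle
      have hn1 : n - 1 + 1 = n := by omega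
      rw [hn1] at hstrict
      omega
  obtain ⟨ν, hνdeg, hνmem⟩ := hex
  have hJg : J = Ideal.span (Set.range g) := hJ
  refine ⟨?_, ?_, ?_⟩
  · have h3 : 2*d - n + 1 ≤ 3 * (d-2) := by omega
    have h4 : 3 * (d-2) ≤ n * (d-2) := Nat.mul_le_mul_right _ hn
    omega
  · have hpos : ∃ i, ν i ≠ 0 := by
      by_contra hz
      push_neg at hz
      have hν0 : ν = 0 := Finsupp.ext (fun i => hz i)
      rw [hν0, map_zero] at hνdeg
      omega
    obtain ⟨i, hi⟩ := hpos
    set μ := ν - Finsupp.single i 1 with hμ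
    have hsplit : Finsupp.single i 1 + μ = ν := by
      ext j
      simp only [hμ, Finsupp.coe_add, Finsupp.coe_tsub, Pi.add_apply, Pi.sub_apply,
        Finsupp.single_apply]
      by_cases hij : i = j
      · subst hij
        simp only [if_true, eq_self_iff_true]
        have := hi
        omega
      · simp [hij]
    have hμdeg : μ.degree = 2*d - n := by
      have hcast := congrArg Finsupp.degree hsplit
      rw [degree_add, degree_single] at hcast
      omega
    refine ⟨μ, ?_, ?_⟩
    · rw [← degree_eq_sum]; exact hμdeg
    · intro h0
      apply hνmem
      rw [← hJg]
      have hmono : monomial ν (1:ℂ) = X i ^ 1 * monomial μ 1 := by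
        rw [← monomial_single_add, hsplit]
      rw [hmono]
      exact Ideal.mul_mem_left _ _ (Ideal.Quotient.eq_zero_iff_mem.mp h0)
  · refine ⟨ν, ?_, ?_⟩
    · rw [← degree_eq_sum]; exact hνdeg
    · intro h0
      exact hνmem (hJg ▸ Ideal.Quotient.eq_zero_iff_mem.mp h0)
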